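/- Let k > 0 and R > 0, and for x, y in EuclideanSpace ℝ (Fin 3) with x ≠ y define G^i(x,y) := (1/(2k²))·(e^{−k‖x−y‖} − e^{ik‖x−y‖})/(4π‖x−y‖) (a complex number, where e^{−k‖x−y‖} is a real exponential and e^{ik‖x−y‖} = Complex.exp(I·k‖x−y‖)). There exists a constant C > 0 such that for all x, y with ‖y‖ ≤ R and ‖x‖ ≥ 2R, one has |‖x‖·e^{−ik‖x‖}·G^i(x,y) + (1/(8πk²))·e^{−ik·⟪x,y⟫/‖x‖}| ≤ C/‖x‖. -/

import Mathlib

open scoped RealInnerProductSpace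

/-- The incident point-source field for the biharmonic wave equation:
`G^i(x,y) = (1/(2k²))·(e^{-k‖x-y‖} - e^{ik‖x-y‖})/(4π‖x-y‖)`. -/
noncomputable def pointSourceField (k : ℝ) (x y : EuclideanSpace ℝ (Fin 3)) : ℂ :=
  (1 / (2 * (k : ℂ) ^ 2)) *
    (((Real.exp (-(k * ‖x - y‖)) : ℝ) : ℂ) - Complex.exp (Complex.I * (k * ‖x - y‖)))
    / (4 * (Real.pi : ℂ) * (‖x - y‖ : ℂ))


/-- `|e^{iθ} - 1| ≤ |θ|`. -/
lemma abs_expI_sub_one (θ : ℝ) :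
    ‖(Complex.exp (Complex.I * θ) - 1)‖ ≤ |θ| := by
  have h : Complex.exp (Complex.I * θ) - 1
      = Complex.ofReal (Real.cos θ - 1) + Complex.ofReal (Real.sin θ) * Complex.I := by
    rw [mul_comm, Complex.exp_mul_I, ← Complex.ofReal_cos, ← Complex.ofReal_sin]
    push_cast; ring
  rw [h, Complex.norm_def, Complex.normSq_add_mul_I]
  have hcos : Real.cos θ = 1 - 2 * Real.sin (θ / 2) ^ 2 := by
    have := Real.cos_sq' (θ / 2)
    have h2 : Real.cos θ = Real.cos (θ/2) ^ 2 - Real.sin (θ/2) ^ 2 := by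
      rw [← Real.cos_two_mul']; ring_nf
    rw [h2, this]; ring
  have hsum : (Real.cos θ - 1) ^ 2 + Real.sin θ ^ 2 = 4 * Real.sin (θ / 2) ^ 2 := by
    have hs := Real.sin_sq_add_cos_sq θ
    nlinarith [hcos, hs]
  rw [hsum]
  have hsin : |Real.sin (θ / 2)| ≤ |θ / 2| := Real.abs_sin_le_abs
  have hsq : Real.sin (θ / 2) ^ 2 ≤ (θ / 2) ^ 2 := by
    have := mul_self_le_mul_self (abs_nonneg _) hsin
    simpa [← sq, sq_abs] using this
  have h4 : 4 * Real.sin (θ / 2) ^ 2 ≤ θ ^ 2 := by nlinarith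
  calc Real.sqrt (4 * Real.sin (θ / 2) ^ 2) ≤ Real.sqrt (θ ^ 2) := Real.sqrt_le_sqrt h4
    _ = |θ| := Real.sqrt_sq_eq_abs θ

/-- `|e^{ia} - e^{ib}| ≤ |a - b|`. -/
lemma abs_expI_sub_expI (a b : ℝ) :
    ‖(Complex.exp (Complex.I * a) - Complex.exp (Complex.I * b))‖ ≤ |a - b| := by
  have h : Complex.exp (Complex.I * a) - Complex.exp (Complex.I * b)
      = Complex.exp (Complex.I * b) * (Complex.exp (Complex.I * ((a - b : ℝ) : ℂ)) - 1) := by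
    rw [mul_sub, ← Complex.exp_add, mul_one]
    push_cast; ring_nf
  rw [h, norm_mul]
  have : ‖(Complex.exp (Complex.I * b))‖ = 1 := by
    rw [mul_comm]; exact Complex.norm_exp_ofReal_mul_I b
  rw [this, one_mul]
  exact abs_expI_sub_one _

set_option maxHeartbeats 1000000 in
/-- Uniform far-field asymptotics of the biharmonic point-source field:
`‖x‖·e^{-ik‖x‖}·G^i(x,y) = -(1/(8πk²))·e^{-ik⟪x,y⟫/‖x‖} + O(1/‖x‖)` uniformly for
`‖y‖ ≤ R` and `‖x‖ ≥ 2R`. -/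
theorem pointSource_farfield (k R : ℝ) (hk : 0 < k) (hR : 0 < R) :
    ∃ C : ℝ, 0 < C ∧ ∀ x y : EuclideanSpace ℝ (Fin 3), ‖y‖ ≤ R → 2 * R ≤ ‖x‖ →
      ‖((‖x‖ : ℂ) * Complex.exp (-(Complex.I * (k * ‖x‖))) * pointSourceField k x y
        + (1 / (8 * (Real.pi : ℂ) * (k : ℂ) ^ 2))
          * Complex.exp (-(Complex.I * (k * (⟪x, y⟫ / ‖x‖)))))‖ ≤ C / ‖x‖ := by
  have hπ := Real.pi_pos
  refine ⟨(4 / k + k * R ^ 2 + 2 * R) / (8 * Real.pi * k ^ 2) + 1, by positivity, ?_⟩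
  intro x y hy hx
  set t : ℝ := ‖x‖ with htdef
  set r : ℝ := ‖x - y‖ with hrdef
  set s : ℝ := ⟪x, y⟫ with hsdef
  have ht0 : 0 < t := lt_of_lt_of_le (by positivity) hx
  have hRt : R ≤ t / 2 := by linarith
  have hrt : t - R ≤ r := by
    have := norm_sub_norm_le x y
    rw [← htdef, ← hrdef] at this; linarith
  have hr2 : t / 2 ≤ r := by linarith
  have hr0 : 0 < r := lt_of_lt_of_le (by linarith) hr2
  have hrub : |r - t| ≤ R := by
    have h1 : |‖x - y‖ - ‖x‖| ≤ ‖x - y - x‖ := abs_norm_sub_norm_le _ _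
    have h2 : ‖x - y - x‖ = ‖y‖ := by rw [sub_sub_cancel_left, norm_neg]
    rw [h2, ← htdef, ← hrdef] at h1; linarith
  have hp_y : |s / t| ≤ ‖y‖ := by
    rw [abs_div, abs_of_pos ht0, div_le_iff₀ ht0]
    have := abs_real_inner_le_norm x y
    rw [← htdef, ← hsdef] at this; nlinarith
  have hp_abs : |s / t| ≤ R := hp_y.trans hy
  have hsq : r ^ 2 = t ^ 2 - 2 * s + ‖y‖ ^ 2 := by
    rw [hrdef, htdef, hsdef]; exact norm_sub_sq_real x y
  clear_value t r s
  -- key phase estimate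
  have hkey : |r - (t - s / t)| ≤ R ^ 2 / t := by
    have ht' : t ≠ 0 := ne_of_gt ht0
    have hden : t ≤ r + (t - s / t) := by
      have h1 : s / t ≤ R := (le_abs_self _).trans hp_abs
      linarith
    have hdenpos : 0 < r + (t - s / t) := lt_of_lt_of_le ht0 hden
    have hnum : (r - (t - s / t)) * (r + (t - s / t)) = ‖y‖ ^ 2 - (s / t) ^ 2 := by
      have expand : (t - s / t) ^ 2 = t ^ 2 - 2 * s + (s / t) ^ 2 := by
        field_simp; ring
      nlinarith [hsq, expand]
    have hsq2 : (s / t) ^ 2 ≤ ‖y‖ ^ 2 := by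
      have := mul_self_le_mul_self (abs_nonneg (s / t)) hp_y
      simpa [← sq, sq_abs] using this
    have hnum_abs : |‖y‖ ^ 2 - (s / t) ^ 2| ≤ R ^ 2 := by
      rw [abs_of_nonneg (by linarith)]
      nlinarith [sq_nonneg (s / t), norm_nonneg y]
    have heq : r - (t - s / t) = (‖y‖ ^ 2 - (s / t) ^ 2) / (r + (t - s / t)) := by
      rw [eq_div_iff (ne_of_gt hdenpos)]; exact hnum
    rw [heq, abs_div, abs_of_pos hdenpos]
    exact div_le_div₀ (by positivity) hnum_abs ht0 hden
  -- algebraic identity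
  have hk0 : (k : ℂ) ≠ 0 := Complex.ofReal_ne_zero.2 (ne_of_gt hk)
  have hπ0 : (Real.pi : ℂ) ≠ 0 := Complex.ofReal_ne_zero.2 (ne_of_gt hπ)
  have hr0' : (r : ℂ) ≠ 0 := Complex.ofReal_ne_zero.2 (ne_of_gt hr0)
  have ht0' : (t : ℂ) ≠ 0 := Complex.ofReal_ne_zero.2 (ne_of_gt ht0)
  have hEeq : ((t : ℂ) * Complex.exp (-(Complex.I * (k * t))) * pointSourceField k x y
      + (1 / (8 * (Real.pi : ℂ) * (k : ℂ) ^ 2))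
          * Complex.exp (-(Complex.I * (k * ((s : ℂ) / (t : ℂ))))))
      = 1 / (8 * (Real.pi : ℂ) * (k : ℂ) ^ 2) *
        ( ((t / r * Real.exp (-(k * r)) : ℝ) : ℂ)
            * Complex.exp (Complex.I * ((-(k * t) : ℝ) : ℂ))
          + (Complex.exp (Complex.I * ((-(k * (s / t)) : ℝ) : ℂ))
             - Complex.exp (Complex.I * ((k * (r - t) : ℝ) : ℂ)))
          + ((1 - t / r : ℝ) : ℂ) * Complex.exp (Complex.I * ((k * (r - t) : ℝ) : ℂ)) ) := by
    have e1 : Complex.exp (Complex.I * ((-(k * t) : ℝ) : ℂ))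
        = Complex.exp (-(Complex.I * ((k : ℂ) * t))) := by congr 1; push_cast; ring
    have e2 : Complex.exp (Complex.I * ((k * (r - t) : ℝ) : ℂ))
        = Complex.exp (Complex.I * ((k : ℂ) * r)) * Complex.exp (-(Complex.I * ((k : ℂ) * t))) := by
      rw [← Complex.exp_add]; congr 1; push_cast; ring
    have e3 : Complex.exp (Complex.I * ((-(k * (s / t)) : ℝ) : ℂ))
        = Complex.exp (-(Complex.I * ((k : ℂ) * ((s : ℂ) / (t : ℂ))))) := by
      congr 1; push_cast; ring
    rw [e1, e2, e3]
    unfold pointSourceField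
    rw [← hrdef]
    push_cast
    set E1 := Complex.exp (-(Complex.I * ((k : ℂ) * (t : ℂ)))) with hE1
    set E2 := Complex.exp (Complex.I * ((k : ℂ) * (r : ℂ))) with hE2
    set E3 := Complex.exp (-(Complex.I * ((k : ℂ) * ((s : ℂ) / (t : ℂ))))) with hE3
    set A := Complex.exp (-((k : ℂ) * (r : ℂ))) with hA
    ring
  rw [hEeq, norm_mul]
  have habsc : ‖(1 / (8 * (Real.pi : ℂ) * (k : ℂ) ^ 2))‖
      = 1 / (8 * Real.pi * k ^ 2) := by
    have : (1 / (8 * (Real.pi : ℂ) * (k : ℂ) ^ 2)) = ((1 / (8 * Real.pi * k ^ 2) : ℝ) : ℂ) := by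
      push_cast; ring
    rw [this, Complex.norm_real, Real.norm_eq_abs, abs_of_pos (by positivity)]
  rw [habsc]
  -- bounds on the three pieces
  have hb1 : ‖(((t / r * Real.exp (-(k * r)) : ℝ) : ℂ)
      * Complex.exp (Complex.I * ((-(k * t) : ℝ) : ℂ)))‖ ≤ 4 / (k * t) := by
    rw [norm_mul, Complex.norm_real, Real.norm_eq_abs, mul_comm Complex.I, Complex.norm_exp_ofReal_mul_I, mul_one,
      abs_of_nonneg (by positivity)]
    have htr2 : t / r ≤ 2 := by rw [div_le_iff₀ hr0]; linarith
    have hA1 : Real.exp (-(k * r)) ≤ Real.exp (-(k * (t / 2))) :=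
      Real.exp_le_exp.2 (by nlinarith)
    have hA2 : Real.exp (-(k * (t / 2))) ≤ 2 / (k * t) := by
      rw [Real.exp_neg]
      have hu : 0 < k * (t / 2) := by positivity
      have h := Real.add_one_le_exp (k * (t / 2))
      calc (Real.exp (k * (t / 2)))⁻¹ ≤ (k * (t / 2))⁻¹ :=
            inv_anti₀ hu (by linarith)
        _ = 2 / (k * t) := by rw [inv_eq_one_div]; field_simp
    have h1 : 0 ≤ Real.exp (-(k * r)) := Real.exp_nonneg _
    have h2 : 0 ≤ 2 / (k * t) := by positivity
    have h3 : 0 ≤ t / r := by positivity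
    have h5 : t / r * Real.exp (-(k * r)) ≤ 2 * (2 / (k * t)) :=
      mul_le_mul htr2 (hA1.trans hA2) h1 (by norm_num)
    have h4 : 2 * (2 / (k * t)) = 4 / (k * t) := by ring
    linarith
  have hb2 : ‖(Complex.exp (Complex.I * ((-(k * (s / t)) : ℝ) : ℂ))
      - Complex.exp (Complex.I * ((k * (r - t) : ℝ) : ℂ)))‖ ≤ k * R ^ 2 / t := by
    refine (abs_expI_sub_expI _ _).trans ?_
    have : -(k * (s / t)) - k * (r - t) = -(k * (r - (t - s / t))) := by ring
    rw [this, abs_neg, abs_mul, abs_of_pos hk]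
    calc k * |r - (t - s / t)| ≤ k * (R ^ 2 / t) :=
          mul_le_mul_of_nonneg_left hkey hk.le
      _ = k * R ^ 2 / t := by ring
  have hb3 : ‖(((1 - t / r : ℝ) : ℂ)
      * Complex.exp (Complex.I * ((k * (r - t) : ℝ) : ℂ)))‖ ≤ 2 * R / t := by
    rw [norm_mul, Complex.norm_real, Real.norm_eq_abs, mul_comm Complex.I, Complex.norm_exp_ofReal_mul_I, mul_one]
    have heq : (1 : ℝ) - t / r = (r - t) / r := by field_simp
    rw [heq, abs_div, abs_of_pos hr0]
    calc |r - t| / r ≤ R / (t / 2) := div_le_div₀ hR.le hrub (by linarith) hr2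
      _ = 2 * R / t := by field_simp
  have htr : ‖(((t / r * Real.exp (-(k * r)) : ℝ) : ℂ)
            * Complex.exp (Complex.I * ((-(k * t) : ℝ) : ℂ))
          + (Complex.exp (Complex.I * ((-(k * (s / t)) : ℝ) : ℂ))
             - Complex.exp (Complex.I * ((k * (r - t) : ℝ) : ℂ)))
          + ((1 - t / r : ℝ) : ℂ) * Complex.exp (Complex.I * ((k * (r - t) : ℝ) : ℂ)))‖
      ≤ 4 / (k * t) + k * R ^ 2 / t + 2 * R / t := by
    refine (norm_add_le _ _).trans ?_
    refine add_le_add ((norm_add_le _ _).trans (add_le_add hb1 hb2)) hb3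
  refine le_trans (mul_le_mul_of_nonneg_left htr (by positivity)) ?_
  have heq2 : 1 / (8 * Real.pi * k ^ 2) * (4 / (k * t) + k * R ^ 2 / t + 2 * R / t)
      = ((4 / k + k * R ^ 2 + 2 * R) / (8 * Real.pi * k ^ 2)) / t := by
    field_simp
  rw [heq2]
  exact (div_le_div_iff_of_pos_right ht0).2 (by linarith)
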